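/- There is a universal constant K > 0 such that the following holds. Let (|Ψ⟩, {A_x^a}) be a symmetric projective strategy with r = 3 whose consistency-test acceptance probability is at least 1 − ε, let 1 ≤ k ≤ n, and let R be a family of sub-measurements of arity k. Then the collection Ŝ_x^g := A_x^{g(x_{≤k})} √(R_{x_{>k}}^g) is feasible for the self-improvement convex program for R and achieves objective value at most inc(R,A) + K√ε; in particular, the optimum ω of the program satisfies ω ≤ inc(R,A) + K√ε. -/

import Mathlib

open scoped Kronecker ComplexConjugate ComplexOrder Matrix

namespace MIP

noncomputable section

abbrev Mat (d : ℕ) := Matrix (Fin d) (Fin d) ℂ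

/-- Real part of the trace. -/
def rTr {m : Type*} [Fintype m] (M : Matrix m m ℂ) : ℝ := M.trace.re

/-- Positive semidefinite square root (`0` if the matrix is not PSD). -/
def psqrt {m : Type*} [Fintype m] [DecidableEq m] (A : Matrix m m ℂ) : Matrix m m ℂ :=
  letI := Classical.propDecidable A.PosSemidef
  if h : A.PosSemidef then
    h.1.eigenvectorUnitary.1 * Matrix.diagonal ((↑) ∘ Real.sqrt ∘ h.1.eigenvalues) *
      (star h.1.eigenvectorUnitary : Matrix m m ℂ) else 0

/-- Loewner order `A ≤ B`. -/
def PSDle {m : Type*} [Fintype m] (A B : Matrix m m ℂ) : Prop := (B - A).PosSemidef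

/-- Trace norm of a square complex matrix. -/
def traceNorm {m : Type*} [Fintype m] [DecidableEq m] (M : Matrix m m ℂ) : ℝ :=
  rTr (psqrt (Mᴴ * M))

/-- `‖X‖_ρ² = Tr (X Xᴴ ρ)`. -/
def rhoNormSq {d : ℕ} (ρ X : Mat d) : ℝ := rTr (X * Xᴴ * ρ)

/-- `⟨ψ| M 0 ⊗ ⋯ ⊗ M (r-1) |ψ⟩` (real part). -/
def tExp {r d : ℕ} (ψ : (Fin r → Fin d) → ℂ) (M : Fin r → Mat d) : ℝ :=
  (∑ v : Fin r → Fin d, ∑ w : Fin r → Fin d,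
      conj (ψ v) * (∏ i, M i (v i) (w i)) * ψ w).re

/-- `⟨ψ| M 0 ⊗ ⋯ ⊗ M (r-1) |ψ⟩` (complex value). -/
def tExpC {r d : ℕ} (ψ : (Fin r → Fin d) → ℂ) (M : Fin r → Mat d) : ℂ :=
  ∑ v : Fin r → Fin d, ∑ w : Fin r → Fin d,
      conj (ψ v) * (∏ i, M i (v i) (w i)) * ψ w

/-- Invariance of a vector in `(ℂ^d)^{⊗r}` under all permutations of the factors. -/
def PermInvariant {r d : ℕ} (ψ : (Fin r → Fin d) → ℂ) : Prop :=
  ∀ σ : Equiv.Perm (Fin r), ∀ v, ψ (v ∘ σ) = ψ v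

/-- Reduced density matrix of `|ψ⟩⟨ψ|` on register `i`. -/
def red1 {r d : ℕ} (ψ : (Fin r → Fin d) → ℂ) (i : Fin r) : Mat d :=
  Matrix.of fun j k => ∑ v : Fin r → Fin d,
    if (v i).val = 0 then ψ (Function.update v i j) * conj (ψ (Function.update v i k)) else 0

/-- Reduced density matrix of `|ψ⟩⟨ψ|` on registers `i₁, i₂`. -/
def red2 {r d : ℕ} (ψ : (Fin r → Fin d) → ℂ) (i₁ i₂ : Fin r) :
    Matrix (Fin d × Fin d) (Fin d × Fin d) ℂ :=
  Matrix.of fun a b => ∑ v : Fin r → Fin d,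
    if (v i₁).val = 0 ∧ (v i₂).val = 0 then
      ψ (Function.update (Function.update v i₁ a.1) i₂ a.2) *
        conj (ψ (Function.update (Function.update v i₁ b.1) i₂ b.2))
    else 0

/-- A symmetric projective strategy with `r` provers, questions in `F^n`,
answers in `F`, on local dimension `d`. -/
structure Strategy (r n d : ℕ) (F : Type*) [Field F] [Fintype F] where
  ψ : (Fin r → Fin d) → ℂ
  A : (Fin n → F) → F → Mat d
  unit : ∑ v : Fin r → Fin d, Complex.normSq (ψ v) = 1
  perm : PermInvariant ψ
  herm : ∀ x a, (A x a).IsHermitian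
  proj : ∀ x a, A x a * A x a = A x a
  complete : ∀ x, ∑ a : F, A x a = 1

variable {F : Type*} [Field F] [Fintype F] [DecidableEq F]

/-- Consistency-test acceptance probability. -/
def consProb {r n d : ℕ} (S : Strategy r n d F) : ℝ :=
  (∑ x : Fin n → F, ∑ a : F, tExp S.ψ fun _ => S.A x a) / (Fintype.card F : ℝ) ^ n

/-- Linearity-test acceptance probability in direction `i`. -/
def linProbDir {r n d : ℕ} (S : Strategy r n d F) (i : Fin n) : ℝ :=
  (∑ x : Fin n → F, ∑ yi : F, ∑ zi : F,
      if yi ≠ x i ∧ zi ≠ x i ∧ yi ≠ zi then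
        ∑ α : F, ∑ β : F,
          tExp S.ψ fun j =>
            if j.val = 0 then S.A x (α * x i + β)
            else if j.val = 1 then S.A (Function.update x i yi) (α * yi + β)
            else if j.val = 2 then S.A (Function.update x i zi) (α * zi + β)
            else 1
      else 0) /
    ((Fintype.card F : ℝ) ^ n * ((Fintype.card F : ℝ) - 1) * ((Fintype.card F : ℝ) - 2))

/-- Linearity-test acceptance probability (averaged over the direction). -/
def linProb {r n d : ℕ} (S : Strategy r n d F) : ℝ :=
  (∑ i : Fin n, linProbDir S i) / n

/-- A multilinear function `F^k → F`. -/
def IsMultilinear {k : ℕ} (g : (Fin k → F) → F) : Prop :=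
  ∀ (i : Fin k) (x : Fin k → F), ∃ α β : F, ∀ t : F, g (Function.update x i t) = α * t + β

/-- First `k` coordinates `x_{≤k}`. -/
def xle {n k : ℕ} (hk : k ≤ n) (x : Fin n → F) : Fin k → F :=
  fun j => x (Fin.castLE hk j)

/-- Last `n - k` coordinates `x_{>k}`. -/
def xgt {n : ℕ} (k : ℕ) (hk : k ≤ n) (x : Fin n → F) : Fin (n - k) → F :=
  fun j => x ⟨k + j.val, by have := j.isLt; omega⟩

/-- The restriction `g(·, x_{k+1},…,x_ℓ)` of `g : F^ℓ → F` to its first `k` variables, the last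
`ℓ - k` variables being substituted with the corresponding coordinates of `x ∈ F^n`. -/
def midRestrict {n k ℓ : ℕ} (hkl : k ≤ ℓ) (hl : ℓ ≤ n) (g : (Fin ℓ → F) → F) (x : Fin n → F) :
    (Fin k → F) → F :=
  fun u => g fun j =>
    if h : j.val < k then u ⟨j.val, h⟩ else x ⟨j.val, by have := j.isLt; omega⟩

/-- A family of sub-measurements of arity `k`, with outcomes the multilinear functions
`F^k → F` (the matrices are indexed by all functions, vanishing on non-multilinear ones). -/
structure SubFamily (n d : ℕ) (F : Type*) [Field F] [Fintype F] [DecidableEq F] (k : ℕ) where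
  P : (Fin (n - k) → F) → ((Fin k → F) → F) → Mat d
  psd : ∀ y g, (P y g).PosSemidef
  ml : ∀ y g, ¬ IsMultilinear g → P y g = 0
  sub : ∀ y, (1 - ∑ g : (Fin k → F) → F, P y g).PosSemidef

/-- `cons(P,Q)` for arities `k ≤ ℓ`. -/
def consF {n d k ℓ : ℕ} (hkl : k ≤ ℓ) (hl : ℓ ≤ n)
    (P : SubFamily n d F k) (Q : SubFamily n d F ℓ)
    (ρ : Matrix (Fin d × Fin d) (Fin d × Fin d) ℂ) : ℝ :=
  (∑ x : Fin n → F, ∑ f : (Fin k → F) → F, ∑ g : (Fin ℓ → F) → F,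
      if f = midRestrict hkl hl g x then
        rTr ((P.P (xgt k (hkl.trans hl) x) f ⊗ₖ Q.P (xgt ℓ hl x) g) * ρ)
      else 0) / (Fintype.card F : ℝ) ^ n

/-- `inc(P,Q)` for arities `k ≤ ℓ`. -/
def incF {n d k ℓ : ℕ} (hkl : k ≤ ℓ) (hl : ℓ ≤ n)
    (P : SubFamily n d F k) (Q : SubFamily n d F ℓ)
    (ρ : Matrix (Fin d × Fin d) (Fin d × Fin d) ℂ) : ℝ :=
  (∑ x : Fin n → F, ∑ f : (Fin k → F) → F, ∑ g : (Fin ℓ → F) → F,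
      if f ≠ midRestrict hkl hl g x then
        rTr ((P.P (xgt k (hkl.trans hl) x) f ⊗ₖ Q.P (xgt ℓ hl x) g) * ρ)
      else 0) / (Fintype.card F : ℝ) ^ n

/-- `cons(P,Q)` for arbitrary arities (symmetric convention). -/
def consSym {n d k ℓ : ℕ} (hk : k ≤ n) (hl : ℓ ≤ n)
    (P : SubFamily n d F k) (Q : SubFamily n d F ℓ)
    (ρ : Matrix (Fin d × Fin d) (Fin d × Fin d) ℂ) : ℝ :=
  if h : k ≤ ℓ then consF h hl P Q ρ else consF (le_of_not_ge h) hk Q P ρ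

/-- `inc(P,A)` where `A` are the strategy's measurements (regarded as the arity-0 family). -/
def incA {n d k : ℕ} (hk : k ≤ n) (P : SubFamily n d F k)
    (A : (Fin n → F) → F → Mat d) (ρ : Matrix (Fin d × Fin d) (Fin d × Fin d) ℂ) : ℝ :=
  (∑ x : Fin n → F, ∑ g : (Fin k → F) → F, ∑ a : F,
      if a ≠ g (xle hk x) then rTr ((P.P (xgt k hk x) g ⊗ₖ A x a) * ρ) else 0) /
    (Fintype.card F : ℝ) ^ n

/-- `Tr_ρ(P)` for a family of sub-measurements, against the one-register density `ρ`. -/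
def trF {n d k : ℕ} (P : SubFamily n d F k) (ρ : Mat d) : ℝ :=
  (∑ y : Fin (n - k) → F, ∑ g : (Fin k → F) → F, rTr (P.P y g * ρ)) /
    (Fintype.card F : ℝ) ^ (n - k)

/-- Merge first `k` coordinates `u` and last `n - k` coordinates `y` into a point of `F^n`. -/
def merge {n k : ℕ} (hk : k ≤ n) (u : Fin k → F) (y : Fin (n - k) → F) : Fin n → F :=
  fun j => if h : j.val < k then u ⟨j.val, h⟩ else y ⟨j.val - k, by have := j.isLt; omega⟩

/-- `E_{x_{≤k}} Ŝ_x^g`, with the last coordinates fixed to `y`. -/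
def avgLow {n d k : ℕ} (hk : k ≤ n)
    (Sh : (Fin n → F) → ((Fin k → F) → F) → Mat d)
    (y : Fin (n - k) → F) (g : (Fin k → F) → F) : Mat d :=
  ((Fintype.card F : ℂ) ^ k)⁻¹ • ∑ u : Fin k → F, Sh (merge hk u y) g

/-- Feasibility for the self-improvement convex program. -/
def Feasible {n d k : ℕ} (hk : k ≤ n) (A : (Fin n → F) → F → Mat d)
    (Sh : (Fin n → F) → ((Fin k → F) → F) → Mat d) : Prop :=
  (∀ x g, ¬ IsMultilinear g → Sh x g = 0) ∧
    ∀ x a, PSDle (∑ g : (Fin k → F) → F,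
      if g (xle hk x) = a then Sh x g * (Sh x g)ᴴ else 0) (A x a)

/-- Objective of the self-improvement convex program. -/
def objective {n d k : ℕ} (hk : k ≤ n) (R : SubFamily n d F k) (ρ : Mat d)
    (Sh : (Fin n → F) → ((Fin k → F) → F) → Mat d) : ℝ :=
  (∑ x : Fin n → F, ∑ g : (Fin k → F) → F,
      rhoNormSq ρ (Sh x g - psqrt (R.P (xgt k hk x) g))) / (Fintype.card F : ℝ) ^ n

/-- Optimum value `ω` of the self-improvement convex program. -/
def progOpt {n d k : ℕ} (hk : k ≤ n) (A : (Fin n → F) → F → Mat d)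
    (R : SubFamily n d F k) (ρ : Mat d) : ℝ :=
  sInf {w | ∃ Sh, Feasible hk A Sh ∧ objective hk R ρ Sh = w}


/-- Remove the `i`-th coordinate: `x_{¬i}`. -/
def removeCoord {n : ℕ} (i : Fin n) (x : Fin n → F) : Fin (n - 1) → F :=
  fun j => if h : j.val < i.val then x ⟨j.val, by have := j.isLt; omega⟩
    else x ⟨j.val + 1, by have := j.isLt; omega⟩

/-- Partial trace over the middle factor of `ℂ^d ⊗ ℂ^d ⊗ ℂ^{d'}`. -/
def ptrace2 {d d' : ℕ} (σ : Matrix (Fin d × Fin d × Fin d') (Fin d × Fin d × Fin d') ℂ) :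
    Matrix (Fin d × Fin d') (Fin d × Fin d') ℂ :=
  Matrix.of fun a b => ∑ m : Fin d, σ (a.1, m, a.2) (b.1, m, b.2)

/-- Partial trace over the first factor of `ℂ^d ⊗ ℂ^{d'}`. -/
def ptrFst {d d' : ℕ} (σ : Matrix (Fin d × Fin d') (Fin d × Fin d') ℂ) :
    Matrix (Fin d') (Fin d') ℂ :=
  Matrix.of fun k l => ∑ m : Fin d, σ (m, k) (m, l)

/-- Partial trace over the second factor of `ℂ^d ⊗ ℂ^{d'}`. -/
def ptrSnd {d d' : ℕ} (σ : Matrix (Fin d × Fin d') (Fin d × Fin d') ℂ) : Mat d :=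
  Matrix.of fun i j => ∑ m : Fin d', σ (i, m) (j, m)


/-! ## psqrt basics -/

lemma psqrt_eq_diag {m : Type*} [Fintype m] [DecidableEq m] {A : Matrix m m ℂ}
    (hA : A.PosSemidef) : psqrt A = hA.1.eigenvectorUnitary.1 *
      Matrix.diagonal ((↑) ∘ Real.sqrt ∘ hA.1.eigenvalues) *
      (star hA.1.eigenvectorUnitary : Matrix m m ℂ) := by
  rw [psqrt]
  exact dif_pos hA

lemma psqrt_psd {m : Type*} [Fintype m] [DecidableEq m] {A : Matrix m m ℂ}
    (hA : A.PosSemidef) : (psqrt A).PosSemidef := by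
  rw [psqrt_eq_diag hA]
  have hD : (Matrix.diagonal ((↑) ∘ Real.sqrt ∘ hA.1.eigenvalues) : Matrix m m ℂ).PosSemidef := by
    rw [Matrix.posSemidef_diagonal_iff]
    intro i
    simp only [Function.comp_apply]
    exact_mod_cast Real.sqrt_nonneg _
  have h := hD.mul_mul_conjTranspose_same (hA.1.eigenvectorUnitary : Matrix m m ℂ)
  rwa [← Matrix.star_eq_conjTranspose, ← Unitary.coe_star] at h

lemma psqrt_herm {m : Type*} [Fintype m] [DecidableEq m] {A : Matrix m m ℂ}
    (hA : A.PosSemidef) : (psqrt A).IsHermitian := (psqrt_psd hA).isHermitian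

lemma psqrt_mul_self {m : Type*} [Fintype m] [DecidableEq m] {A : Matrix m m ℂ}
    (hA : A.PosSemidef) : psqrt A * psqrt A = A := by
  rw [psqrt_eq_diag hA]
  set U := hA.1.eigenvectorUnitary with hUdef
  set D : Matrix m m ℂ := Matrix.diagonal ((↑) ∘ Real.sqrt ∘ hA.1.eigenvalues) with hDdef
  have hU : (star U : Matrix m m ℂ) * U.1 = 1 := Unitary.coe_star_mul_self _
  have hDD : D * D = (Matrix.diagonal (RCLike.ofReal ∘ hA.1.eigenvalues) : Matrix m m ℂ) := by
    rw [hDdef, Matrix.diagonal_mul_diagonal]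
    congr 1
    funext i
    simp only [Function.comp_apply]
    rw [← Complex.ofReal_mul, Real.mul_self_sqrt (hA.eigenvalues_nonneg i)]
    rfl
  rw [show U.1 * D * (star U : Matrix m m ℂ) * (U.1 * D * (star U : Matrix m m ℂ))
      = U.1 * (D * ((star U : Matrix m m ℂ) * U.1) * D) * (star U : Matrix m m ℂ) by
    simp only [mul_assoc], hU, mul_one, hDD]
  conv_rhs => rw [hA.1.spectral_theorem]
  simp [hUdef]

lemma psqrt_zero {m : Type*} [Fintype m] [DecidableEq m] :
    psqrt (0 : Matrix m m ℂ) = 0 := by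
  have h := psqrt_mul_self (Matrix.PosSemidef.zero : (0 : Matrix m m ℂ).PosSemidef)
  have h2 : (psqrt (0 : Matrix m m ℂ))ᴴ * psqrt 0 = 0 := by
    rw [(psqrt_herm (Matrix.PosSemidef.zero : (0 : Matrix m m ℂ).PosSemidef)).eq]
    exact h
  exact Matrix.conjTranspose_mul_self_eq_zero.mp h2

/-! ## Toolkit -/

abbrev V (d : ℕ) := Fin 3 → Fin d

variable {d : ℕ}

/-- Triple tensor product as a matrix on `V d`. -/
def K3 (M N P : Mat d) : Matrix (V d) (V d) ℂ :=
  Matrix.of fun v w => M (v 0) (w 0) * N (v 1) (w 1) * P (v 2) (w 2)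

@[simp] lemma K3_apply (M N P : Mat d) (v w : V d) :
    K3 M N P v w = M (v 0) (w 0) * N (v 1) (w 1) * P (v 2) (w 2) := rfl

def tripEquiv (d : ℕ) : (Fin d × Fin d × Fin d) ≃ V d where
  toFun p := ![p.1, p.2.1, p.2.2]
  invFun v := (v 0, v 1, v 2)
  left_inv p := by simp
  right_inv v := by funext i; fin_cases i <;> simp

lemma sumV {α : Type*} [AddCommMonoid α] (h : V d → α) :
    ∑ v : V d, h v = ∑ a : Fin d, ∑ b : Fin d, ∑ c : Fin d, h ![a, b, c] := by
  rw [← Equiv.sum_comp (tripEquiv d) h]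
  rw [Fintype.sum_prod_type]
  refine Finset.sum_congr rfl fun a _ => ?_
  rw [Fintype.sum_prod_type]
  rfl

@[simp] lemma cons3_zero (a b c : Fin d) : (![a,b,c] : V d) 0 = a := rfl
@[simp] lemma cons3_one (a b c : Fin d) : (![a,b,c] : V d) 1 = b := rfl
@[simp] lemma cons3_two (a b c : Fin d) : (![a,b,c] : V d) 2 = c := rfl

lemma triple_sum_mul {α : Type*} [CommRing α] (f g h : Fin d → α) :
    (∑ a, f a) * (∑ b, g b) * (∑ c, h c) = ∑ a, ∑ b, ∑ c, f a * g b * h c := by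
  rw [Finset.sum_mul_sum, Finset.sum_mul]
  exact Finset.sum_congr rfl fun a _ => by
    rw [Finset.sum_mul]
    exact Finset.sum_congr rfl fun b _ => by rw [Finset.mul_sum]

lemma K3_mul (M N P M' N' P' : Mat d) :
    K3 M N P * K3 M' N' P' = K3 (M * M') (N * N') (P * P') := by
  ext v w
  rw [Matrix.mul_apply]
  rw [sumV (fun u => K3 M N P v u * K3 M' N' P' u w)]
  simp only [K3_apply, cons3_zero, cons3_one, cons3_two, Matrix.mul_apply]
  rw [triple_sum_mul]
  exact Finset.sum_congr rfl fun a _ => Finset.sum_congr rfl fun b _ =>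
    Finset.sum_congr rfl fun c _ => by ring

lemma K3_conjTranspose (M N P : Mat d) : (K3 M N P)ᴴ = K3 Mᴴ Nᴴ Pᴴ := by
  ext v w
  simp only [Matrix.conjTranspose_apply, K3_apply, star_mul']

lemma K3_one : (K3 (1 : Mat d) 1 1) = 1 := by
  ext v w
  by_cases h : v = w
  · subst h; simp [Matrix.one_apply]
  · have h' : v 0 ≠ w 0 ∨ v 1 ≠ w 1 ∨ v 2 ≠ w 2 := by
      by_contra hc
      push_neg at hc
      exact h (funext fun i => by fin_cases i <;> tauto)
    rw [Matrix.one_apply_ne h]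
    rcases h' with h' | h' | h' <;> simp [Matrix.one_apply_ne h']

lemma K3_sub_left (M M' N P : Mat d) : K3 (M - M') N P = K3 M N P - K3 M' N P := by
  ext v w; simp [Matrix.sub_apply]; ring

lemma K3_sub_mid (M N N' P : Mat d) : K3 M (N - N') P = K3 M N P - K3 M N' P := by
  ext v w; simp [Matrix.sub_apply]; ring

lemma K3_add_left (M M' N P : Mat d) : K3 (M + M') N P = K3 M N P + K3 M' N P := by
  ext v w; simp [Matrix.add_apply]; ring

lemma K3_sum_left {ι : Type*} (s : Finset ι) (M : ι → Mat d) (N P : Mat d) :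
    K3 (∑ i ∈ s, M i) N P = ∑ i ∈ s, K3 (M i) N P := by
  ext v w
  simp [Matrix.sum_apply, Finset.sum_mul]

lemma K3_sum_mid {ι : Type*} (s : Finset ι) (M : Mat d) (N : ι → Mat d) (P : Mat d) :
    K3 M (∑ i ∈ s, N i) P = ∑ i ∈ s, K3 M (N i) P := by
  ext v w
  simp [Matrix.sum_apply, Finset.sum_mul, Finset.mul_sum]

lemma K3_psd {M N P : Mat d} (hM : M.PosSemidef) (hN : N.PosSemidef) (hP : P.PosSemidef) :
    (K3 M N P).PosSemidef := by
  have h : K3 M N P = (K3 (psqrt M) (psqrt N) (psqrt P))ᴴ * K3 (psqrt M) (psqrt N) (psqrt P) := by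
    rw [K3_conjTranspose, (psqrt_herm hM).eq, (psqrt_herm hN).eq,
      (psqrt_herm hP).eq, K3_mul, psqrt_mul_self hM, psqrt_mul_self hN,
      psqrt_mul_self hP]
  rw [h]
  exact Matrix.posSemidef_conjTranspose_mul_self _

/-! ## Inner product toolkit -/

def ip (φ χ : V d → ℂ) : ℂ := star φ ⬝ᵥ χ

lemma ip_apply (φ χ : V d → ℂ) : ip φ χ = ∑ v : V d, conj (φ v) * χ v := by
  simp [ip, dotProduct]

lemma ip_eq_inner (φ χ : V d → ℂ) :
    ip φ χ = inner (𝕜 := ℂ) ((EuclideanSpace.equiv (V d) ℂ).symm φ)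
      ((EuclideanSpace.equiv (V d) ℂ).symm χ) := by
  rw [PiLp.inner_apply]
  simp only [RCLike.inner_apply]
  rw [ip_apply]
  exact Finset.sum_congr rfl fun v _ => mul_comm _ _

lemma ip_self_re_nonneg (φ : V d → ℂ) : 0 ≤ (ip φ φ).re := by
  rw [ip_apply, Complex.re_sum]
  refine Finset.sum_nonneg fun v _ => ?_
  rw [← Complex.normSq_eq_conj_mul_self]
  exact Complex.normSq_nonneg _

def nrm (φ : V d → ℂ) : ℝ := Real.sqrt (ip φ φ).re

lemma nrm_nonneg (φ : V d → ℂ) : 0 ≤ nrm φ := Real.sqrt_nonneg _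

lemma nrm_sq (φ : V d → ℂ) : nrm φ ^ 2 = (ip φ φ).re :=
  Real.sq_sqrt (ip_self_re_nonneg φ)

lemma nrm_eq_norm (φ : V d → ℂ) : nrm φ = ‖(EuclideanSpace.equiv (V d) ℂ).symm φ‖ := by
  have h : (ip φ φ).re = ‖(EuclideanSpace.equiv (V d) ℂ).symm φ‖ ^ 2 := by
    rw [ip_eq_inner]
    exact inner_self_eq_norm_sq (𝕜 := ℂ) _
  rw [nrm, h, Real.sqrt_sq (norm_nonneg _)]

lemma abs_ip_le (φ χ : V d → ℂ) : ‖ip φ χ‖ ≤ nrm φ * nrm χ := by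
  rw [ip_eq_inner, nrm_eq_norm, nrm_eq_norm]
  exact norm_inner_le_norm (𝕜 := ℂ) _ _

lemma re_ip_le_abs (φ χ : V d → ℂ) : (ip φ χ).re ≤ nrm φ * nrm χ :=
  (Complex.re_le_norm _).trans (abs_ip_le φ χ)

lemma ip_mulVec_left (M : Matrix (V d) (V d) ℂ) (φ χ : V d → ℂ) :
    ip (M *ᵥ φ) χ = ip φ (Mᴴ *ᵥ χ) := by
  rw [ip, ip, Matrix.star_mulVec, Matrix.dotProduct_mulVec]

lemma ip_mulVec_herm {M : Matrix (V d) (V d) ℂ} (hM : M.IsHermitian) (φ χ : V d → ℂ) :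
    ip (M *ᵥ φ) χ = ip φ (M *ᵥ χ) := by
  rw [ip_mulVec_left, hM.eq]

lemma ip_psd_nonneg {M : Matrix (V d) (V d) ℂ} (hM : M.PosSemidef) (φ : V d → ℂ) :
    0 ≤ (ip φ (M *ᵥ φ)).re := by
  have h := hM.dotProduct_mulVec_nonneg φ
  rw [Complex.le_def] at h
  simpa [ip] using h.1

lemma ip_add_right (φ χ₁ χ₂ : V d → ℂ) : ip φ (χ₁ + χ₂) = ip φ χ₁ + ip φ χ₂ :=
  dotProduct_add _ _ _

lemma ip_sub_right (φ χ₁ χ₂ : V d → ℂ) : ip φ (χ₁ - χ₂) = ip φ χ₁ - ip φ χ₂ := by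
  exact dotProduct_sub _ _ _

/-- Loewner monotonicity of expectation values. -/
lemma re_ip_mono {M N : Matrix (V d) (V d) ℂ} (h : (N - M).PosSemidef) (φ : V d → ℂ) :
    (ip φ (M *ᵥ φ)).re ≤ (ip φ (N *ᵥ φ)).re := by
  have h0 := ip_psd_nonneg h φ
  rw [Matrix.sub_mulVec, ip_sub_right, Complex.sub_re] at h0
  linarith


/-! ## Bridge lemmas -/

lemma sum_ite_val_zero {d : ℕ} (hd : 0 < d) (f : Fin d → ℂ) :
    ∑ a : Fin d, (if (a : Fin d).val = 0 then f a else 0) = f ⟨0, hd⟩ := by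
  have h : ∀ a : Fin d, ((a : Fin d).val = 0) ↔ (a = ⟨0, hd⟩) := fun a => by
    rw [Fin.ext_iff]
  simp only [h]
  simp

lemma update0 {d : ℕ} (a b c j : Fin d) :
    Function.update (![a,b,c] : V d) (0 : Fin 3) j = ![j,b,c] := by
  funext i; fin_cases i <;> simp [Function.update]

lemma update01 {d : ℕ} (a b c j l : Fin d) :
    Function.update (Function.update (![a,b,c] : V d) (0 : Fin 3) j) (1 : Fin 3) l
      = ![j,l,c] := by
  funext i; fin_cases i <;> simp [Function.update]

lemma red1_apply_eq {d : ℕ} (hd : 0 < d) (ψ : V d → ℂ) (j k : Fin d) :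
    red1 ψ 0 j k = ∑ b : Fin d, ∑ c : Fin d, ψ ![j,b,c] * conj (ψ ![k,b,c]) := by
  simp only [red1, Matrix.of_apply]
  rw [sumV (fun v => if (v 0).val = 0 then
    ψ (Function.update v 0 j) * conj (ψ (Function.update v 0 k)) else 0)]
  simp only [cons3_zero, update0]
  rw [← sum_ite_val_zero hd (fun _ => ∑ b : Fin d, ∑ c : Fin d, ψ ![j,b,c] * conj (ψ ![k,b,c]))]
  refine Finset.sum_congr rfl fun a _ => ?_
  split <;> simp

lemma red2_apply_eq {d : ℕ} (hd : 0 < d) (ψ : V d → ℂ) (p q : Fin d × Fin d) :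
    red2 ψ 0 1 p q = ∑ c : Fin d, ψ ![p.1, p.2, c] * conj (ψ ![q.1, q.2, c]) := by
  simp only [red2, Matrix.of_apply]
  rw [sumV (fun v => if (v 0).val = 0 ∧ (v 1).val = 0 then
    ψ (Function.update (Function.update v 0 p.1) 1 p.2) *
      conj (ψ (Function.update (Function.update v 0 q.1) 1 q.2)) else 0)]
  have step : ∀ a : Fin d, (∑ b : Fin d, ∑ c : Fin d,
      if ((![a,b,c] : V d) 0).val = 0 ∧ ((![a,b,c] : V d) 1).val = 0 then
        ψ (Function.update (Function.update (![a,b,c] : V d) 0 p.1) 1 p.2) *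
          conj (ψ (Function.update (Function.update (![a,b,c] : V d) 0 q.1) 1 q.2)) else 0)
      = if (a : Fin d).val = 0 then
          ∑ c : Fin d, ψ ![p.1, p.2, c] * conj (ψ ![q.1, q.2, c]) else 0 := by
    intro a
    simp only [cons3_zero, cons3_one, update01]
    by_cases ha : (a : Fin d).val = 0
    · rw [if_pos ha]
      simp only [ha, true_and]
      rw [← sum_ite_val_zero hd (fun _ => ∑ c : Fin d,
        ψ ![p.1, p.2, c] * conj (ψ ![q.1, q.2, c]))]
      refine Finset.sum_congr rfl fun b _ => ?_
      split <;> simp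
    · rw [if_neg ha]
      simp [ha]
  rw [Finset.sum_congr rfl (fun a _ => step a)]
  exact sum_ite_val_zero hd _

lemma sum_rot3 {α : Type*} [AddCommMonoid α] {β γ δ : Type*}
    {s : Finset β} {t : Finset γ} {u : Finset δ}
    (f : β → γ → δ → α) :
    (∑ x ∈ s, ∑ y ∈ t, ∑ z ∈ u, f x y z) = ∑ z ∈ u, ∑ x ∈ s, ∑ y ∈ t, f x y z := by
  calc (∑ x ∈ s, ∑ y ∈ t, ∑ z ∈ u, f x y z)
      = ∑ x ∈ s, ∑ z ∈ u, ∑ y ∈ t, f x y z :=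
        Finset.sum_congr rfl fun x _ => Finset.sum_comm
    _ = ∑ z ∈ u, ∑ x ∈ s, ∑ y ∈ t, f x y z := Finset.sum_comm

lemma c3a {d : ℕ} (a b c : Fin d) : (![a,b,c] : V d) 0 = a := by simp
lemma c3b {d : ℕ} (a b c : Fin d) : (![a,b,c] : V d) 1 = b := by simp
lemma c3c {d : ℕ} (a b c : Fin d) : (![a,b,c] : V d) 2 = c := by simp

lemma trace_mul_red1 {d : ℕ} (hd : 0 < d) (ψ : V d → ℂ) (M : Mat d) :
    (M * red1 ψ 0).trace = ip ψ (K3 M 1 1 *ᵥ ψ) := by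
  have hR : ip ψ (K3 M 1 1 *ᵥ ψ) =
      ∑ v : V d, ∑ a' : Fin d, conj (ψ v) * (M (v 0) a' * ψ ![a', v 1, v 2]) := by
    rw [ip_apply]
    refine Finset.sum_congr rfl fun v _ => ?_
    rw [show (K3 M 1 1 *ᵥ ψ) v = ∑ w : V d, K3 M 1 1 v w * ψ w from rfl]
    rw [sumV (fun w => K3 M 1 1 v w * ψ w)]
    simp only [K3_apply, c3a, c3b, c3c, Matrix.one_apply,
      mul_ite, ite_mul, mul_one, mul_zero, zero_mul, one_mul]
    simp only [Finset.sum_ite_eq, Finset.mem_univ, if_true, Finset.mul_sum]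
  rw [hR, sumV (fun v => ∑ a' : Fin d, conj (ψ v) * (M (v 0) a' * ψ ![a', v 1, v 2]))]
  simp only [cons3_zero, cons3_one, cons3_two]
  simp only [Matrix.trace, Matrix.diag_apply, Matrix.mul_apply, red1_apply_eq hd,
    Finset.mul_sum]
  -- LHS : ∑ a ∑ a' ∑ b ∑ c, M a a' * (ψ ![a',b,c] * conj (ψ ![a,b,c]))
  refine Finset.sum_congr rfl fun a _ => ?_
  rw [sum_rot3 (fun b c a' => conj (ψ ![a,b,c]) * (M a a' * ψ ![a', b, c]))]
  refine Finset.sum_congr rfl fun a' _ => ?_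
  refine Finset.sum_congr rfl fun b _ => ?_
  refine Finset.sum_congr rfl fun c _ => ?_
  ring

lemma trace_kron_red2 {d : ℕ} (hd : 0 < d) (ψ : V d → ℂ) (M N : Mat d) :
    ((M ⊗ₖ N) * red2 ψ 0 1).trace = ip ψ (K3 M N 1 *ᵥ ψ) := by
  have hR : ip ψ (K3 M N 1 *ᵥ ψ) =
      ∑ v : V d, ∑ a' : Fin d, ∑ b' : Fin d,
        conj (ψ v) * (M (v 0) a' * N (v 1) b' * ψ ![a', b', v 2]) := by
    rw [ip_apply]
    refine Finset.sum_congr rfl fun v _ => ?_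
    rw [show (K3 M N 1 *ᵥ ψ) v = ∑ w : V d, K3 M N 1 v w * ψ w from rfl]
    rw [sumV (fun w => K3 M N 1 v w * ψ w)]
    simp only [K3_apply, c3a, c3b, c3c, Matrix.one_apply,
      mul_ite, ite_mul, mul_one, mul_zero, zero_mul, one_mul]
    simp only [Finset.sum_ite_eq, Finset.mem_univ, if_true, Finset.mul_sum]
  rw [hR, sumV (fun v => ∑ a' : Fin d, ∑ b' : Fin d,
    conj (ψ v) * (M (v 0) a' * N (v 1) b' * ψ ![a', b', v 2]))]
  simp only [cons3_zero, cons3_one, cons3_two]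
  simp only [Matrix.trace, Matrix.diag_apply, Matrix.mul_apply, red2_apply_eq hd,
    Fintype.sum_prod_type, Matrix.kroneckerMap_apply, Finset.mul_sum]
  -- LHS : ∑ a ∑ b ∑ a' ∑ b' ∑ c, (M a a' * N b b') * (ψ ![a',b',c] * conj (ψ ![a,b,c]))
  refine Finset.sum_congr rfl fun a _ => ?_
  refine Finset.sum_congr rfl fun b _ => ?_
  rw [show (∑ c : Fin d, ∑ a' : Fin d, ∑ b' : Fin d,
      conj (ψ ![a,b,c]) * (M a a' * N b b' * ψ ![a', b', c]))
    = ∑ a' : Fin d, ∑ b' : Fin d, ∑ c : Fin d,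
      conj (ψ ![a,b,c]) * (M a a' * N b b' * ψ ![a', b', c])
    from (sum_rot3 (fun a' b' c => conj (ψ ![a,b,c]) * (M a a' * N b b' * ψ ![a', b', c]))).symm]
  refine Finset.sum_congr rfl fun a' _ => ?_
  refine Finset.sum_congr rfl fun b' _ => ?_
  refine Finset.sum_congr rfl fun c _ => ?_
  ring

lemma tExpC_eq_ip {d : ℕ} (ψ : V d → ℂ) (M : Fin 3 → Mat d) :
    tExpC ψ M = ip ψ (K3 (M 0) (M 1) (M 2) *ᵥ ψ) := by
  rw [tExpC, ip_apply]
  refine Finset.sum_congr rfl fun v _ => ?_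
  rw [show (K3 (M 0) (M 1) (M 2) *ᵥ ψ) v
    = ∑ w : V d, K3 (M 0) (M 1) (M 2) v w * ψ w from rfl]
  rw [Finset.mul_sum]
  refine Finset.sum_congr rfl fun w _ => ?_
  rw [K3_apply, Fin.prod_univ_three]
  ring

lemma tExp_eq_re {d : ℕ} (ψ : V d → ℂ) (M : Fin 3 → Mat d) :
    tExp ψ M = (tExpC ψ M).re := by
  rfl

/-! ## psqrt and PSD facts -/

lemma posSemidef_sum {d : ℕ} {ι : Type*} (s : Finset ι) (f : ι → Mat d)
    (h : ∀ i ∈ s, (f i).PosSemidef) : (∑ i ∈ s, f i).PosSemidef :=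
  Finset.sum_induction f _ (fun _ _ ha hb => ha.add hb) Matrix.PosSemidef.zero h

lemma K3_herm {d : ℕ} {M N P : Mat d} (hM : M.IsHermitian) (hN : N.IsHermitian)
    (hP : P.IsHermitian) : (K3 M N P).IsHermitian := by
  rw [Matrix.IsHermitian, K3_conjTranspose, hM.eq, hN.eq, hP.eq]

/-- Expectation values against `ψ`, real part. -/
def EV {d : ℕ} (ψ : V d → ℂ) (M N P : Mat d) : ℝ := (ip ψ (K3 M N P *ᵥ ψ)).re

lemma EV_mono {d : ℕ} (ψ : V d → ℂ) {M N P M' N' P' : Mat d}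
    (h : (K3 M' N' P' - K3 M N P).PosSemidef) : EV ψ M N P ≤ EV ψ M' N' P' :=
  re_ip_mono h ψ

lemma ip_sum_mulVec {d : ℕ} (φ : V d → ℂ) {ι : Type*} (s : Finset ι)
    (T : ι → Matrix (V d) (V d) ℂ) (χ : V d → ℂ) :
    ip φ ((∑ i ∈ s, T i) *ᵥ χ) = ∑ i ∈ s, ip φ (T i *ᵥ χ) := by
  simp only [ip, Matrix.mulVec, dotProduct, Matrix.sum_apply, Finset.sum_mul,
    Finset.mul_sum]
  rw [show (∑ i ∈ s, ∑ v : V d, ∑ w : V d, star φ v * (T i v w * χ w))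
    = ∑ v : V d, ∑ w : V d, ∑ i ∈ s, star φ v * (T i v w * χ w) from
      (sum_rot3 (fun v w i => star φ v * (T i v w * χ w))).symm]

lemma EV_sum_left {d : ℕ} (ψ : V d → ℂ) {ι : Type*} (s : Finset ι) (M : ι → Mat d)
    (N P : Mat d) : EV ψ (∑ i ∈ s, M i) N P = ∑ i ∈ s, EV ψ (M i) N P := by
  rw [EV, K3_sum_left, ip_sum_mulVec, Complex.re_sum]
  exact Finset.sum_congr rfl fun i _ => rfl

lemma EV_sum_mid {d : ℕ} (ψ : V d → ℂ) {ι : Type*} (s : Finset ι) (M : Mat d)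
    (N : ι → Mat d) (P : Mat d) : EV ψ M (∑ i ∈ s, N i) P = ∑ i ∈ s, EV ψ M (N i) P := by
  rw [EV, K3_sum_mid, ip_sum_mulVec, Complex.re_sum]
  exact Finset.sum_congr rfl fun i _ => rfl

/-! ## Core identity -/

lemma core_identity {d : ℕ} (ψ : V d → ℂ) (Q B sQ : Mat d)
    (hBH : B.IsHermitian) (hBP : B * B = B) (hsH : sQ.IsHermitian) (hsQ : sQ * sQ = Q) :
    ip ψ (K3 (B * Q * B) 1 1 *ᵥ ψ)
      = ip ψ (K3 Q B 1 *ᵥ ψ)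
        + ip (K3 sQ B 1 *ᵥ ψ) (K3 sQ 1 1 *ᵥ ((K3 B 1 1 - K3 1 B 1) *ᵥ ψ))
        + ip (K3 sQ 1 1 *ᵥ ((K3 B 1 1 - K3 1 B 1) *ᵥ ψ)) (K3 (sQ * B) 1 1 *ᵥ ψ) := by
  have h1 : (1 : Mat d).IsHermitian := Matrix.isHermitian_one
  have hK2 : (K3 sQ B 1).IsHermitian := K3_herm hsH hBH h1
  have hK1 : (K3 sQ 1 1).IsHermitian := K3_herm hsH h1 h1
  have hKD : (K3 B 1 1 - K3 1 B 1).IsHermitian :=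
    (K3_herm hBH h1 h1).sub (K3_herm h1 hBH h1)
  -- second term
  have e2 : ip (K3 sQ B 1 *ᵥ ψ) (K3 sQ 1 1 *ᵥ ((K3 B 1 1 - K3 1 B 1) *ᵥ ψ))
      = ip ψ ((K3 sQ B 1 * K3 sQ 1 1 * (K3 B 1 1 - K3 1 B 1)) *ᵥ ψ) := by
    rw [ip_mulVec_herm hK2, Matrix.mulVec_mulVec, Matrix.mulVec_mulVec]
  -- third term
  have e3 : ip (K3 sQ 1 1 *ᵥ ((K3 B 1 1 - K3 1 B 1) *ᵥ ψ)) (K3 (sQ * B) 1 1 *ᵥ ψ)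
      = ip ψ (((K3 B 1 1 - K3 1 B 1) * K3 sQ 1 1 * K3 (sQ * B) 1 1) *ᵥ ψ) := by
    rw [ip_mulVec_herm hK1, ip_mulVec_herm hKD, Matrix.mulVec_mulVec, Matrix.mulVec_mulVec]
  have hmat : K3 Q B 1 + K3 sQ B 1 * K3 sQ 1 1 * (K3 B 1 1 - K3 1 B 1)
      + (K3 B 1 1 - K3 1 B 1) * K3 sQ 1 1 * K3 (sQ * B) 1 1 = K3 (B * Q * B) 1 1 := by
    have hQB : K3 sQ B 1 * K3 sQ 1 1 = K3 Q B 1 := by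
      rw [K3_mul, hsQ, mul_one, mul_one]
    have hA1 : B * sQ * (sQ * B) = B * Q * B := by
      rw [← mul_assoc, mul_assoc B sQ sQ, hsQ]
    have hA2 : sQ * (sQ * B) = Q * B := by rw [← mul_assoc, hsQ]
    rw [mul_sub, sub_mul, sub_mul, hQB]
    simp only [K3_mul, Matrix.mul_one, Matrix.one_mul, mul_one, one_mul, hBP, hA1, hA2]
    abel
  rw [e2, e3, ← ip_add_right, ← ip_add_right, ← Matrix.add_mulVec, ← Matrix.add_mulVec, hmat]

/-! ## Per-g bounds -/

section PerX

variable {d : ℕ} {G : Type*} [Fintype G] [DecidableEq G]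
  {F : Type} [Fintype F] [DecidableEq F]

/-- The main per-question estimate. -/
lemma per_x (ψ : V d → ℂ) (hψ : ip ψ ψ = 1)
    (A : F → Mat d) (hAh : ∀ a, (A a).IsHermitian) (hAp : ∀ a, A a * A a = A a)
    (hAc : ∑ a : F, A a = 1)
    (Q : G → Mat d) (hQ : ∀ g, (Q g).PosSemidef)
    (hQs : ∀ s : Finset G, ((1 : Mat d) - ∑ g ∈ s, Q g).PosSemidef)
    (val : G → F) :
    ∑ g : G, EV ψ ((1 - A (val g)) * Q g * (1 - A (val g))) 1 1
      ≤ (∑ g : G, EV ψ (Q g) (1 - A (val g)) 1)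
        + 3 * Real.sqrt (∑ a : F,
            (ip ((K3 (1 - A a) 1 1 - K3 1 (1 - A a) 1) *ᵥ ψ)
               ((K3 (1 - A a) 1 1 - K3 1 (1 - A a) 1) *ᵥ ψ)).re) := by
  classical
  set B : F → Mat d := fun a => 1 - A a with hB
  have hBH : ∀ a, (B a).IsHermitian := fun a => Matrix.isHermitian_one.sub (hAh a)
  have hBP : ∀ a, B a * B a = B a := fun a => by
    simp only [hB, mul_sub, sub_mul, one_mul, mul_one, hAp a]
    abel
  have hApsd : ∀ a, (A a).PosSemidef := fun a => by
    have h := Matrix.posSemidef_conjTranspose_mul_self (A a)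
    rwa [(hAh a).eq, hAp a] at h
  set sQ : G → Mat d := fun g => psqrt (Q g) with hsQdef
  have hsH : ∀ g, (sQ g).IsHermitian := fun g => psqrt_herm (hQ g)
  have hsQ : ∀ g, sQ g * sQ g = Q g := fun g => psqrt_mul_self (hQ g)
  -- vectors
  set Dv : F → (V d → ℂ) := fun a => (K3 (B a) 1 1 - K3 1 (B a) 1) *ᵥ ψ with hDv
  set wv : G → (V d → ℂ) := fun g => K3 (sQ g) 1 1 *ᵥ Dv (val g) with hwv
  set βv : G → (V d → ℂ) := fun g => K3 (sQ g * B (val g)) 1 1 *ᵥ ψ with hβv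
  set γv : G → (V d → ℂ) := fun g => K3 (sQ g) (B (val g)) 1 *ᵥ ψ with hγv
  set sX : ℝ := ∑ a : F, (ip (Dv a) (Dv a)).re with hsX
  have hsX0 : 0 ≤ sX := Finset.sum_nonneg fun a _ => ip_self_re_nonneg _
  -- pointwise bound from core identity
  have hpoint : ∀ g : G, EV ψ (B (val g) * Q g * B (val g)) 1 1
      ≤ EV ψ (Q g) (B (val g)) 1 + (nrm (γv g) * nrm (wv g) + nrm (wv g) * nrm (βv g)) := by
    intro g
    have hid := core_identity ψ (Q g) (B (val g)) (sQ g) (hBH _) (hBP _) (hsH g) (hsQ g)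
    have : EV ψ (B (val g) * Q g * B (val g)) 1 1
        = EV ψ (Q g) (B (val g)) 1 + ((ip (γv g) (wv g)).re + (ip (wv g) (βv g)).re) := by
      rw [EV, EV, hid]
      simp only [Complex.add_re, hγv, hwv, hβv, hDv, Matrix.mulVec_mulVec]
      ring
    rw [this]
    have h1 : (ip (γv g) (wv g)).re ≤ nrm (γv g) * nrm (wv g) := re_ip_le_abs _ _
    have h2 : (ip (wv g) (βv g)).re ≤ nrm (wv g) * nrm (βv g) := re_ip_le_abs _ _
    linarith
  -- norm-squared computations
  have hw_sq : ∀ g : G, nrm (wv g) ^ 2 = (ip (Dv (val g)) (K3 (Q g) 1 1 *ᵥ Dv (val g))).re := by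
    intro g
    rw [nrm_sq, hwv]
    rw [ip_mulVec_herm (K3_herm (hsH g) Matrix.isHermitian_one Matrix.isHermitian_one),
      Matrix.mulVec_mulVec, K3_mul, hsQ, mul_one]
  have hβ_sq : ∀ g : G, nrm (βv g) ^ 2 = EV ψ (B (val g) * Q g * B (val g)) 1 1 := by
    intro g
    rw [nrm_sq, hβv]
    rw [ip_mulVec_left, Matrix.mulVec_mulVec]
    have key : (K3 (sQ g * B (val g)) 1 1)ᴴ * K3 (sQ g * B (val g)) 1 1
        = K3 (B (val g) * Q g * B (val g)) 1 1 := by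
      rw [K3_conjTranspose, Matrix.conjTranspose_one, Matrix.conjTranspose_mul,
        (hsH g).eq, (hBH (val g)).eq, K3_mul, one_mul]
      rw [show B (val g) * sQ g * (sQ g * B (val g)) = B (val g) * Q g * B (val g) from by
        rw [← mul_assoc, mul_assoc (B (val g)) (sQ g) (sQ g), hsQ]]
    rw [key]
    rfl
  have hγ_sq : ∀ g : G, nrm (γv g) ^ 2 = EV ψ (Q g) (B (val g)) 1 := by
    intro g
    rw [nrm_sq, hγv]
    rw [ip_mulVec_left, Matrix.mulVec_mulVec, K3_conjTranspose, K3_mul,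
      (hsH g).eq, (hBH (val g)).eq, Matrix.conjTranspose_one, hsQ, hBP, one_mul]
    rfl
  -- fiberwise sums
  have fiber_bound : ∀ (T : G → Mat d), (∀ g, (T g).PosSemidef) →
      (∀ s : Finset G, ((1 : Mat d) - ∑ g ∈ s, T g).PosSemidef) →
      ∀ (z : F → (V d → ℂ)),
      ∑ g : G, (ip (z (val g)) (K3 (T g) 1 1 *ᵥ z (val g))).re
        ≤ ∑ a : F, (ip (z a) (z a)).re := by
    intro T hT hTs z
    rw [← Finset.sum_fiberwise Finset.univ val
      (fun g => (ip (z (val g)) (K3 (T g) 1 1 *ᵥ z (val g))).re)]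
    refine Finset.sum_le_sum fun a _ => ?_
    have hfib : ∀ g ∈ Finset.univ.filter (fun g => val g = a),
        (ip (z (val g)) (K3 (T g) 1 1 *ᵥ z (val g))).re
          = (ip (z a) (K3 (T g) 1 1 *ᵥ z a)).re := by
      intro g hg
      rw [(Finset.mem_filter.mp hg).2]
    rw [Finset.sum_congr rfl hfib]
    have hsum : ∑ g ∈ Finset.univ.filter (fun g => val g = a),
        (ip (z a) (K3 (T g) 1 1 *ᵥ z a)).re
        = (ip (z a) (K3 (∑ g ∈ Finset.univ.filter (fun g => val g = a), T g) 1 1 *ᵥ z a)).re := by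
      rw [K3_sum_left, ip_sum_mulVec, Complex.re_sum]
    rw [hsum]
    have hmono : (ip (z a) (K3 (∑ g ∈ Finset.univ.filter (fun g => val g = a), T g) 1 1
        *ᵥ z a)).re ≤ (ip (z a) ((1 : Matrix (V d) (V d) ℂ) *ᵥ z a)).re := by
      refine re_ip_mono ?_ (z a)
      rw [← K3_one, ← K3_sub_left]
      exact K3_psd (hTs _) Matrix.PosSemidef.one Matrix.PosSemidef.one
    rw [Matrix.one_mulVec] at hmono
    exact hmono
  -- (1) ∑ wv² ≤ sX
  have hw_bound : ∑ g : G, nrm (wv g) ^ 2 ≤ sX := by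
    rw [Finset.sum_congr rfl fun g _ => hw_sq g]
    exact fiber_bound Q hQ hQs Dv
  -- helper: ∑_g EV ψ (Q g) 1 1 ≤ 1
  have hEV1 : ∀ (T : G → Mat d), (∀ g, (T g).PosSemidef) →
      (∀ s : Finset G, ((1 : Mat d) - ∑ g ∈ s, T g).PosSemidef) →
      ∑ g : G, EV ψ (T g) 1 1 ≤ 1 := by
    intro T hT hTs
    rw [← EV_sum_left]
    have hmono : EV ψ (∑ g : G, T g) 1 1 ≤ (ip ψ ((1 : Matrix (V d) (V d) ℂ) *ᵥ ψ)).re := by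
      refine re_ip_mono ?_ ψ
      rw [← K3_one, ← K3_sub_left]
      exact K3_psd (hTs _) Matrix.PosSemidef.one Matrix.PosSemidef.one
    rw [Matrix.one_mulVec, hψ] at hmono
    simpa using hmono
  -- (2) ∑ βv² ≤ 4
  have hAQA_bound : ∑ g : G, EV ψ (A (val g) * Q g * A (val g)) 1 1 ≤ 1 := by
    rw [← Finset.sum_fiberwise Finset.univ val
      (fun g => EV ψ (A (val g) * Q g * A (val g)) 1 1)]
    have step : ∀ a : F, ∑ g ∈ Finset.univ.filter (fun g => val g = a),
        EV ψ (A (val g) * Q g * A (val g)) 1 1 ≤ EV ψ (A a) 1 1 := by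
      intro a
      have hfib : ∀ g ∈ Finset.univ.filter (fun g => val g = a),
          EV ψ (A (val g) * Q g * A (val g)) 1 1 = EV ψ (A a * Q g * A a) 1 1 := by
        intro g hg
        rw [(Finset.mem_filter.mp hg).2]
      rw [Finset.sum_congr rfl hfib]
      have hpull : ∑ g ∈ Finset.univ.filter (fun g => val g = a), EV ψ (A a * Q g * A a) 1 1
          = EV ψ (A a * (∑ g ∈ Finset.univ.filter (fun g => val g = a), Q g) * A a) 1 1 := by
        rw [Finset.mul_sum, Finset.sum_mul, EV_sum_left]
      rw [hpull]
      refine EV_mono ψ ?_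
      rw [← K3_sub_left]
      refine K3_psd ?_ Matrix.PosSemidef.one Matrix.PosSemidef.one
      have key : A a - A a * (∑ g ∈ Finset.univ.filter (fun g => val g = a), Q g) * A a
          = A a * ((1 : Mat d) - ∑ g ∈ Finset.univ.filter (fun g => val g = a), Q g) * (A a)ᴴ := by
        rw [(hAh a).eq, mul_sub, sub_mul, mul_one, hAp a]
      rw [key]
      exact (hQs _).mul_mul_conjTranspose_same (A a)
    calc ∑ a : F, ∑ g ∈ Finset.univ.filter (fun g => val g = a),
          EV ψ (A (val g) * Q g * A (val g)) 1 1
        ≤ ∑ a : F, EV ψ (A a) 1 1 := Finset.sum_le_sum fun a _ => step a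
      _ = 1 := by
          rw [← EV_sum_left, hAc, EV, K3_one, Matrix.one_mulVec, hψ]
          simp
  have hβ_bound : ∑ g : G, nrm (βv g) ^ 2 ≤ 4 := by
    rw [Finset.sum_congr rfl fun g _ => hβ_sq g]
    have hBQB : ∀ g : G, EV ψ (B (val g) * Q g * B (val g)) 1 1
        ≤ EV ψ (Q g) 1 1 + EV ψ (Q g) 1 1
          + (EV ψ (A (val g) * Q g * A (val g)) 1 1 + EV ψ (A (val g) * Q g * A (val g)) 1 1) := by
      intro g
      have hEVadd : ∀ M M' : Mat d, EV ψ (M + M') 1 1 = EV ψ M 1 1 + EV ψ M' 1 1 := by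
        intro M M'
        rw [EV, EV, EV, K3_add_left, Matrix.add_mulVec, ip_add_right, Complex.add_re]
      have hm : EV ψ (B (val g) * Q g * B (val g)) 1 1
          ≤ EV ψ (Q g + Q g + (A (val g) * Q g * A (val g) + A (val g) * Q g * A (val g))) 1 1 := by
        refine EV_mono ψ ?_
        rw [← K3_sub_left]
        refine K3_psd ?_ Matrix.PosSemidef.one Matrix.PosSemidef.one
        have key : Q g + Q g + (A (val g) * Q g * A (val g) + A (val g) * Q g * A (val g))
            - B (val g) * Q g * B (val g)
            = ((1 : Mat d) + A (val g)) * Q g * ((1 : Mat d) + A (val g))ᴴ := by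
          rw [Matrix.conjTranspose_add, Matrix.conjTranspose_one, (hAh (val g)).eq, hB]
          simp only [mul_sub, sub_mul, add_mul, mul_add, one_mul, mul_one]
          abel
        rw [key]
        exact (hQ g).mul_mul_conjTranspose_same _
      calc EV ψ (B (val g) * Q g * B (val g)) 1 1
          ≤ EV ψ (Q g + Q g + (A (val g) * Q g * A (val g) + A (val g) * Q g * A (val g))) 1 1 :=
            hm
        _ = EV ψ (Q g) 1 1 + EV ψ (Q g) 1 1
            + (EV ψ (A (val g) * Q g * A (val g)) 1 1
              + EV ψ (A (val g) * Q g * A (val g)) 1 1) := by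
            rw [hEVadd, hEVadd, hEVadd]
    calc ∑ g : G, EV ψ (B (val g) * Q g * B (val g)) 1 1
        ≤ ∑ g : G, (EV ψ (Q g) 1 1 + EV ψ (Q g) 1 1
            + (EV ψ (A (val g) * Q g * A (val g)) 1 1
              + EV ψ (A (val g) * Q g * A (val g)) 1 1)) :=
          Finset.sum_le_sum fun g _ => hBQB g
      _ = (∑ g : G, EV ψ (Q g) 1 1) + (∑ g : G, EV ψ (Q g) 1 1)
          + ((∑ g : G, EV ψ (A (val g) * Q g * A (val g)) 1 1)
            + (∑ g : G, EV ψ (A (val g) * Q g * A (val g)) 1 1)) := by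
          rw [← Finset.sum_add_distrib, ← Finset.sum_add_distrib, ← Finset.sum_add_distrib]
      _ ≤ 1 + 1 + (1 + 1) := by
          have h1 := hEV1 Q hQ hQs
          have h2 := hAQA_bound
          gcongr
      _ = 4 := by norm_num
  -- (3) ∑ γv² ≤ 1
  have hγ_bound : ∑ g : G, nrm (γv g) ^ 2 ≤ 1 := by
    rw [Finset.sum_congr rfl fun g _ => hγ_sq g]
    have hm : ∀ g : G, EV ψ (Q g) (B (val g)) 1 ≤ EV ψ (Q g) 1 1 := by
      intro g
      refine EV_mono ψ ?_
      have hba : (1 : Mat d) - B (val g) = A (val g) := by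
        rw [hB]
        simp
      rw [← K3_sub_mid, hba]
      exact K3_psd (hQ g) (hApsd (val g)) Matrix.PosSemidef.one
    calc ∑ g : G, EV ψ (Q g) (B (val g)) 1 ≤ ∑ g : G, EV ψ (Q g) 1 1 :=
          Finset.sum_le_sum fun g _ => hm g
      _ ≤ 1 := hEV1 Q hQ hQs
  -- Cauchy-Schwarz assembly
  have CS : ∀ (u : G → ℝ) (c : ℝ), (∀ g, 0 ≤ u g) → 0 ≤ c → (∑ g : G, u g ^ 2 ≤ c) →
      ∑ g : G, u g * nrm (wv g) ≤ Real.sqrt c * Real.sqrt sX := by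
    intro u c hu hc hsum
    have h1 : (∑ g : G, u g * nrm (wv g)) ^ 2
        ≤ (∑ g : G, u g ^ 2) * ∑ g : G, nrm (wv g) ^ 2 :=
      Finset.sum_mul_sq_le_sq_mul_sq Finset.univ u (fun g => nrm (wv g))
    have h2 : (∑ g : G, u g ^ 2) * (∑ g : G, nrm (wv g) ^ 2) ≤ c * sX := by
      have hw0 : 0 ≤ ∑ g : G, nrm (wv g) ^ 2 :=
        Finset.sum_nonneg fun g _ => sq_nonneg _
      have hu0 : 0 ≤ ∑ g : G, u g ^ 2 := Finset.sum_nonneg fun g _ => sq_nonneg _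
      exact mul_le_mul hsum hw_bound hw0 hc
    have h0 : 0 ≤ ∑ g : G, u g * nrm (wv g) :=
      Finset.sum_nonneg fun g _ => mul_nonneg (hu g) (nrm_nonneg _)
    have := Real.sqrt_le_sqrt (h1.trans h2)
    rwa [Real.sqrt_sq h0, Real.sqrt_mul hc] at this
  have CSβ : ∑ g : G, nrm (wv g) * nrm (βv g) ≤ 2 * Real.sqrt sX := by
    have h := CS (fun g => nrm (βv g)) 4 (fun g => nrm_nonneg _) (by norm_num) hβ_bound
    have h4 : Real.sqrt 4 = 2 := by
      rw [show (4 : ℝ) = 2 ^ 2 by norm_num, Real.sqrt_sq (by norm_num : (0:ℝ) ≤ 2)]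
    calc ∑ g : G, nrm (wv g) * nrm (βv g) = ∑ g : G, nrm (βv g) * nrm (wv g) := by
          refine Finset.sum_congr rfl fun g _ => mul_comm _ _
      _ ≤ Real.sqrt 4 * Real.sqrt sX := h
      _ = 2 * Real.sqrt sX := by rw [h4]
  have CSγ : ∑ g : G, nrm (γv g) * nrm (wv g) ≤ 1 * Real.sqrt sX := by
    have h := CS (fun g => nrm (γv g)) 1 (fun g => nrm_nonneg _) (by norm_num) hγ_bound
    simpa using h
  -- final assembly
  calc ∑ g : G, EV ψ (B (val g) * Q g * B (val g)) 1 1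
      ≤ ∑ g : G, (EV ψ (Q g) (B (val g)) 1
          + (nrm (γv g) * nrm (wv g) + nrm (wv g) * nrm (βv g))) :=
        Finset.sum_le_sum fun g _ => hpoint g
    _ = (∑ g : G, EV ψ (Q g) (B (val g)) 1)
        + ((∑ g : G, nrm (γv g) * nrm (wv g)) + (∑ g : G, nrm (wv g) * nrm (βv g))) := by
        rw [← Finset.sum_add_distrib, ← Finset.sum_add_distrib]
    _ ≤ (∑ g : G, EV ψ (Q g) (B (val g)) 1) + (1 * Real.sqrt sX + 2 * Real.sqrt sX) := by
        have := CSβ; have := CSγ; gcongr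
    _ = (∑ g : G, EV ψ (Q g) (B (val g)) 1) + 3 * Real.sqrt sX := by ring

end PerX

lemma K3_sub_right {d : ℕ} (M N P P' : Mat d) :
    K3 M N (P - P') = K3 M N P - K3 M N P' := by
  ext v w; simp [Matrix.sub_apply]; ring

lemma herm_proj_psd {d : ℕ} {M : Mat d} (hh : M.IsHermitian) (hp : M * M = M) :
    M.PosSemidef := by
  have h := Matrix.posSemidef_conjTranspose_mul_self M
  rwa [hh.eq, hp] at h

lemma one_sub_sum_psd {d : ℕ} {ι : Type*} [Fintype ι] [DecidableEq ι] (T : ι → Mat d)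
    (hT : ∀ i, (T i).PosSemidef) (h1 : ((1 : Mat d) - ∑ i : ι, T i).PosSemidef)
    (s : Finset ι) : ((1 : Mat d) - ∑ i ∈ s, T i).PosSemidef := by
  have heq : (1 : Mat d) - ∑ i ∈ s, T i
      = ((1 : Mat d) - ∑ i : ι, T i) + ∑ i ∈ Finset.univ \ s, T i := by
    rw [← Finset.sum_sdiff (Finset.subset_univ s)]
    abel
  rw [heq]
  exact h1.add (posSemidef_sum _ _ fun i _ => hT i)

section Strat

variable {n d : ℕ} {F : Type} [Field F] [Fintype F] [DecidableEq F]

lemma strategy_ip_one (S : Strategy 3 n d F) : ip S.ψ S.ψ = 1 := by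
  rw [ip_apply]
  have h : ∀ v : V d, conj (S.ψ v) * S.ψ v = (Complex.normSq (S.ψ v) : ℂ) := fun v => by
    rw [Complex.normSq_eq_conj_mul_self]
  rw [Finset.sum_congr rfl fun v _ => h v, ← Complex.ofReal_sum, S.unit, Complex.ofReal_one]

lemma strategy_A_psd (S : Strategy 3 n d F) (x : Fin n → F) (a : F) :
    (S.A x a).PosSemidef := herm_proj_psd (S.herm x a) (S.proj x a)

lemma strategy_B_herm (S : Strategy 3 n d F) (x : Fin n → F) (a : F) :
    ((1 : Mat d) - S.A x a).IsHermitian := Matrix.isHermitian_one.sub (S.herm x a)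

lemma strategy_B_proj (S : Strategy 3 n d F) (x : Fin n → F) (a : F) :
    ((1 : Mat d) - S.A x a) * ((1 : Mat d) - S.A x a) = (1 : Mat d) - S.A x a := by
  simp only [mul_sub, sub_mul, one_mul, mul_one, S.proj x a]
  abel

lemma strategy_B_psd (S : Strategy 3 n d F) (x : Fin n → F) (a : F) :
    ((1 : Mat d) - S.A x a).PosSemidef :=
  herm_proj_psd (strategy_B_herm S x a) (strategy_B_proj S x a)

lemma EV_one (ψ : V d → ℂ) (hψ : ip ψ ψ = 1) : EV ψ 1 1 1 = 1 := by
  rw [EV, K3_one, Matrix.one_mulVec, hψ]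
  simp

lemma Dm_eq {d : ℕ} (A : Mat d) :
    K3 ((1 : Mat d) - A) 1 1 - K3 1 ((1 : Mat d) - A) 1 = K3 1 A 1 - K3 A 1 1 := by
  rw [K3_sub_left, K3_sub_mid]
  abel

lemma sqD_eq {d : ℕ} (ψ : V d → ℂ) (A : Mat d) (hA : A.IsHermitian) (hp : A * A = A) :
    (ip ((K3 ((1 : Mat d) - A) 1 1 - K3 1 ((1 : Mat d) - A) 1) *ᵥ ψ)
       ((K3 ((1 : Mat d) - A) 1 1 - K3 1 ((1 : Mat d) - A) 1) *ᵥ ψ)).re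
      = EV ψ 1 A 1 + EV ψ A 1 1 - (EV ψ A A 1 + EV ψ A A 1) := by
  rw [Dm_eq]
  have h1 : (1 : Mat d).IsHermitian := Matrix.isHermitian_one
  have hMh : (K3 1 A 1 - K3 A 1 1).IsHermitian := (K3_herm h1 hA h1).sub (K3_herm hA h1 h1)
  rw [ip_mulVec_herm hMh, Matrix.mulVec_mulVec]
  have hMM : (K3 1 A 1 - K3 A 1 1) * (K3 1 A 1 - K3 A 1 1)
      = (K3 1 A 1 + K3 A 1 1) - (K3 A A 1 + K3 A A 1) := by
    rw [mul_sub, sub_mul, sub_mul, K3_mul, K3_mul, K3_mul, K3_mul]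
    simp only [one_mul, mul_one, hp]
    abel
  rw [hMM, Matrix.sub_mulVec, ip_sub_right, Complex.sub_re, Matrix.add_mulVec, ip_add_right,
    Complex.add_re, Matrix.add_mulVec, ip_add_right, Complex.add_re]
  rfl

lemma sx_eq (S : Strategy 3 n d F) (x : Fin n → F) :
    ∑ a : F, (ip ((K3 ((1 : Mat d) - S.A x a) 1 1 - K3 1 ((1 : Mat d) - S.A x a) 1) *ᵥ S.ψ)
       ((K3 ((1 : Mat d) - S.A x a) 1 1 - K3 1 ((1 : Mat d) - S.A x a) 1) *ᵥ S.ψ)).re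
      = 2 - 2 * ∑ a : F, EV S.ψ (S.A x a) (S.A x a) 1 := by
  have hψ := strategy_ip_one S
  rw [Finset.sum_congr rfl fun a _ => sqD_eq S.ψ (S.A x a) (S.herm x a) (S.proj x a)]
  rw [Finset.sum_sub_distrib, Finset.sum_add_distrib, Finset.sum_add_distrib]
  rw [← EV_sum_mid, ← EV_sum_left, S.complete x, EV_one S.ψ hψ]
  ring

lemma consX_le_EV (S : Strategy 3 n d F) (x : Fin n → F) :
    ∑ a : F, tExp S.ψ (fun _ => S.A x a) ≤ ∑ a : F, EV S.ψ (S.A x a) (S.A x a) 1 := by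
  refine Finset.sum_le_sum fun a _ => ?_
  have h : tExp S.ψ (fun _ => S.A x a) = EV S.ψ (S.A x a) (S.A x a) (S.A x a) := by
    rw [tExp_eq_re, tExpC_eq_ip]
    rfl
  rw [h]
  refine EV_mono S.ψ ?_
  rw [← K3_sub_right]
  exact K3_psd (strategy_A_psd S x a) (strategy_A_psd S x a) (strategy_B_psd S x a)

lemma sum_EVAA1_le_one (S : Strategy 3 n d F) (x : Fin n → F) :
    ∑ a : F, EV S.ψ (S.A x a) (S.A x a) 1 ≤ 1 := by
  have hψ := strategy_ip_one S
  have h1 : ∀ a : F, EV S.ψ (S.A x a) (S.A x a) 1 ≤ EV S.ψ (S.A x a) 1 1 := by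
    intro a
    refine EV_mono S.ψ ?_
    rw [← K3_sub_mid]
    exact K3_psd (strategy_A_psd S x a) (strategy_B_psd S x a) Matrix.PosSemidef.one
  calc ∑ a : F, EV S.ψ (S.A x a) (S.A x a) 1 ≤ ∑ a : F, EV S.ψ (S.A x a) 1 1 :=
        Finset.sum_le_sum fun a _ => h1 a
    _ = 1 := by rw [← EV_sum_left, S.complete x, EV_one S.ψ hψ]

lemma inc_term_eq (hd : 0 < d) (S : Strategy 3 n d F) {k : ℕ} (hkn : k ≤ n)
    (R : SubFamily n d F k) (x : Fin n → F) (g : (Fin k → F) → F) :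
    (∑ a : F, if a ≠ g (xle hkn x) then
        rTr ((R.P (xgt k hkn x) g ⊗ₖ S.A x a) * red2 S.ψ 0 1) else 0)
      = EV S.ψ (R.P (xgt k hkn x) g) (1 - S.A x (g (xle hkn x))) 1 := by
  have h1 : ∀ a : F, rTr ((R.P (xgt k hkn x) g ⊗ₖ S.A x a) * red2 S.ψ 0 1)
      = EV S.ψ (R.P (xgt k hkn x) g) (S.A x a) 1 := fun a => by
    rw [rTr, trace_kron_red2 hd]
    rfl
  have hsum : (∑ a : F, if a ≠ g (xle hkn x) then
      rTr ((R.P (xgt k hkn x) g ⊗ₖ S.A x a) * red2 S.ψ 0 1) else 0)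
      = ∑ a : F, if a ≠ g (xle hkn x) then
          EV S.ψ (R.P (xgt k hkn x) g) (S.A x a) 1 else 0 := by
    refine Finset.sum_congr rfl fun a _ => ?_
    by_cases h : a ≠ g (xle hkn x) <;> simp [h, h1 a]
  rw [hsum, ← Finset.sum_filter, Finset.filter_ne']
  rw [← EV_sum_mid]
  congr 1
  have h2 := Finset.add_sum_erase Finset.univ (S.A x) (Finset.mem_univ (g (xle hkn x)))
  rw [S.complete x] at h2
  rw [eq_sub_of_add_eq' h2]

lemma obj_term_eq (hd : 0 < d) (S : Strategy 3 n d F) {k : ℕ} (hkn : k ≤ n)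
    (R : SubFamily n d F k) (x : Fin n → F) (g : (Fin k → F) → F) :
    rhoNormSq (red1 S.ψ 0)
        (S.A x (g (xle hkn x)) * psqrt (R.P (xgt k hkn x) g) - psqrt (R.P (xgt k hkn x) g))
      = EV S.ψ ((1 - S.A x (g (xle hkn x))) * R.P (xgt k hkn x) g
          * (1 - S.A x (g (xle hkn x)))) 1 1 := by
  have hQp : (R.P (xgt k hkn x) g).PosSemidef := R.psd _ _
  set A' := S.A x (g (xle hkn x)) with hA'
  set Q := R.P (xgt k hkn x) g with hQ
  set sQ' := psqrt Q with hsQ'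
  have hXX : (A' * sQ' - sQ') * (A' * sQ' - sQ')ᴴ = (1 - A') * Q * (1 - A') := by
    have h1 : A' * sQ' - sQ' = -((1 - A') * sQ') := by
      rw [sub_mul, one_mul, neg_sub]
    rw [h1, Matrix.conjTranspose_neg, neg_mul_neg, Matrix.conjTranspose_mul,
      (psqrt_herm hQp).eq, (strategy_B_herm S x (g (xle hkn x))).eq]
    rw [← mul_assoc, mul_assoc (1 - A') sQ' sQ', hsQ', psqrt_mul_self hQp]
  rw [rhoNormSq, hXX, rTr, trace_mul_red1 hd]
  rfl

lemma rhoNormSq_red1_nonneg (hd : 0 < d) (ψ : V d → ℂ) (X : Mat d) :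
    0 ≤ rhoNormSq (red1 ψ 0) X := by
  rw [rhoNormSq, rTr, trace_mul_red1 hd]
  exact ip_psd_nonneg (K3_psd (Matrix.posSemidef_self_mul_conjTranspose X)
    Matrix.PosSemidef.one Matrix.PosSemidef.one) ψ

/-- The consistency defect of the strategy at question `x`. -/
def sxF (S : Strategy 3 n d F) (x : Fin n → F) : ℝ :=
  ∑ a : F, (ip ((K3 ((1 : Mat d) - S.A x a) 1 1 - K3 1 ((1 : Mat d) - S.A x a) 1) *ᵥ S.ψ)
     ((K3 ((1 : Mat d) - S.A x a) 1 1 - K3 1 ((1 : Mat d) - S.A x a) 1) *ᵥ S.ψ)).re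

lemma sxF_nonneg (S : Strategy 3 n d F) (x : Fin n → F) : 0 ≤ sxF S x :=
  Finset.sum_nonneg fun _ _ => ip_self_re_nonneg _

lemma sxF_eq (S : Strategy 3 n d F) (x : Fin n → F) :
    sxF S x = 2 - 2 * ∑ a : F, EV S.ψ (S.A x a) (S.A x a) 1 := sx_eq S x

lemma perx_strategy (S : Strategy 3 n d F) {k : ℕ} (hkn : k ≤ n)
    (R : SubFamily n d F k) (x : Fin n → F) :
    (∑ g : (Fin k → F) → F, EV S.ψ ((1 - S.A x (g (xle hkn x))) * R.P (xgt k hkn x) g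
        * (1 - S.A x (g (xle hkn x)))) 1 1)
      ≤ (∑ g : (Fin k → F) → F, EV S.ψ (R.P (xgt k hkn x) g) (1 - S.A x (g (xle hkn x))) 1)
        + 3 * Real.sqrt (sxF S x) :=
  per_x S.ψ (strategy_ip_one S) (S.A x) (S.herm x) (S.proj x) (S.complete x)
    (fun g => R.P (xgt k hkn x) g) (fun g => R.psd _ g)
    (one_sub_sum_psd _ (fun g => R.psd _ g) (R.sub _))
    (fun g => g (xle hkn x))

end Strat

theorem statement6 :
    ∃ K : ℝ, 0 < K ∧
      ∀ (n d : ℕ) (F : Type) [Field F] [Fintype F] [DecidableEq F] (ε : ℝ)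
        (S : Strategy 3 n d F),
        1 ≤ n → 1 ≤ d →
        1 - ε ≤ consProb S →
        ∀ (k : ℕ) (hk1 : 1 ≤ k) (hkn : k ≤ n) (R : SubFamily n d F k),
          Feasible hkn S.A
            (fun x g => S.A x (g (xle hkn x)) * psqrt (R.P (xgt k hkn x) g)) ∧
          objective hkn R (red1 S.ψ 0)
              (fun x g => S.A x (g (xle hkn x)) * psqrt (R.P (xgt k hkn x) g)) ≤
            incA hkn R S.A (red2 S.ψ 0 1) + K * Real.sqrt ε ∧
          progOpt hkn S.A R (red1 S.ψ 0) ≤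
            incA hkn R S.A (red2 S.ψ 0 1) + K * Real.sqrt ε := by
  classical
  refine ⟨5, by norm_num, ?_⟩
  intro n d F _ _ _ ε S hn hd1 hcons k hk1 hkn R
  have hd : 0 < d := hd1
  have hψ := strategy_ip_one S
  set Sh : (Fin n → F) → ((Fin k → F) → F) → Mat d :=
    fun x g => S.A x (g (xle hkn x)) * psqrt (R.P (xgt k hkn x) g) with hSh
  set Nn : ℝ := ((Fintype.card F : ℝ)) ^ n with hNn
  have hNn0 : 0 < Nn := by
    have : 0 < Fintype.card F := Fintype.card_pos
    positivity
  have hcard : ((Fintype.card (Fin n → F) : ℕ) : ℝ) = Nn := by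
    rw [Fintype.card_fun, Fintype.card_fin]
    push_cast
    rfl
  -- Feasibility
  have hfeas : Feasible hkn S.A Sh := by
    constructor
    · intro x g hml
      show S.A x (g (xle hkn x)) * psqrt (R.P (xgt k hkn x) g) = 0
      rw [R.ml _ _ hml, psqrt_zero, mul_zero]
    · intro x a
      rw [PSDle]
      have hsum : (∑ g : (Fin k → F) → F, if g (xle hkn x) = a then Sh x g * (Sh x g)ᴴ else 0)
          = S.A x a * (∑ g ∈ Finset.univ.filter (fun g : (Fin k → F) → F =>
              g (xle hkn x) = a), R.P (xgt k hkn x) g) * S.A x a := by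
        rw [← Finset.sum_filter, Finset.mul_sum, Finset.sum_mul]
        refine Finset.sum_congr rfl fun g hg => ?_
        have hga : g (xle hkn x) = a := (Finset.mem_filter.mp hg).2
        have hQp : (R.P (xgt k hkn x) g).PosSemidef := R.psd _ _
        show Sh x g * (Sh x g)ᴴ = _
        rw [hSh]
        simp only
        rw [hga, Matrix.conjTranspose_mul, (psqrt_herm hQp).eq, (S.herm x a).eq,
          ← mul_assoc, mul_assoc (S.A x a) (psqrt _) (psqrt _), psqrt_mul_self hQp]
      rw [hsum]
      have h1 : ((1 : Mat d) - ∑ g ∈ Finset.univ.filter (fun g : (Fin k → F) → F =>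
          g (xle hkn x) = a), R.P (xgt k hkn x) g).PosSemidef :=
        one_sub_sum_psd _ (fun g => R.psd _ g) (R.sub _) _
      have key : S.A x a - S.A x a * (∑ g ∈ Finset.univ.filter (fun g : (Fin k → F) → F =>
            g (xle hkn x) = a), R.P (xgt k hkn x) g) * S.A x a
          = S.A x a * ((1 : Mat d) - ∑ g ∈ Finset.univ.filter (fun g : (Fin k → F) → F =>
            g (xle hkn x) = a), R.P (xgt k hkn x) g) * (S.A x a)ᴴ := by
        rw [(S.herm x a).eq, mul_sub, mul_one, sub_mul, S.proj x a]
      rw [key]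
      exact h1.mul_mul_conjTranspose_same _
  -- consistency bound
  have hconsT : Nn * (1 - ε) ≤ ∑ x : Fin n → F, ∑ a : F, tExp S.ψ fun _ => S.A x a := by
    rw [consProb] at hcons
    have h := (le_div_iff₀ hNn0).mp hcons
    linarith [h]
  have hTle : (∑ x : Fin n → F, ∑ a : F, tExp S.ψ fun _ => S.A x a) ≤ Nn := by
    have h1 : ∀ x : Fin n → F, (∑ a : F, tExp S.ψ fun _ => S.A x a) ≤ 1 := fun x =>
      (consX_le_EV S x).trans (sum_EVAA1_le_one S x)
    calc (∑ x : Fin n → F, ∑ a : F, tExp S.ψ fun _ => S.A x a)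
        ≤ ∑ _x : Fin n → F, (1 : ℝ) := Finset.sum_le_sum fun x _ => h1 x
      _ = Nn := by rw [Finset.sum_const, Finset.card_univ, nsmul_eq_mul, mul_one, hcard]
  have hε : 0 ≤ ε := by
    by_contra hneg
    push_neg at hneg
    have : Nn * (1 - ε) > Nn := by nlinarith
    linarith [hconsT, hTle]
  -- global defect bound
  have hsum_sx : ∑ x : Fin n → F, sxF S x ≤ 2 * Nn * ε := by
    have h1 : ∀ x : Fin n → F, sxF S x ≤ 2 - 2 * ∑ a : F, tExp S.ψ fun _ => S.A x a := by
      intro x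
      rw [sxF_eq]
      have := consX_le_EV S x
      linarith
    calc ∑ x : Fin n → F, sxF S x
        ≤ ∑ x : Fin n → F, (2 - 2 * ∑ a : F, tExp S.ψ fun _ => S.A x a) :=
          Finset.sum_le_sum fun x _ => h1 x
      _ = 2 * Nn - 2 * ∑ x : Fin n → F, ∑ a : F, tExp S.ψ fun _ => S.A x a := by
          rw [Finset.sum_sub_distrib, Finset.sum_const, Finset.card_univ, nsmul_eq_mul,
            ← Finset.mul_sum, hcard]
          ring
      _ ≤ 2 * Nn - 2 * (Nn * (1 - ε)) := by linarith [hconsT]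
      _ = 2 * Nn * ε := by ring
  have hsqrt_sum : ∑ x : Fin n → F, Real.sqrt (sxF S x) ≤ Nn * Real.sqrt (2 * ε) := by
    have hsq : (∑ x : Fin n → F, Real.sqrt (sxF S x)) ^ 2
        ≤ Nn ^ 2 * (2 * ε) := by
      have h := sq_sum_le_card_mul_sum_sq (s := (Finset.univ : Finset (Fin n → F)))
        (f := fun x => Real.sqrt (sxF S x))
      have h2 : ∑ x : Fin n → F, Real.sqrt (sxF S x) ^ 2 = ∑ x : Fin n → F, sxF S x := by
        exact Finset.sum_congr rfl fun x _ => Real.sq_sqrt (sxF_nonneg S x)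
      rw [h2, Finset.card_univ] at h
      calc (∑ x : Fin n → F, Real.sqrt (sxF S x)) ^ 2
          ≤ (Fintype.card (Fin n → F) : ℝ) * ∑ x : Fin n → F, sxF S x := h
        _ ≤ Nn * (2 * Nn * ε) := by
            rw [hcard]
            exact mul_le_mul_of_nonneg_left hsum_sx hNn0.le
        _ = Nn ^ 2 * (2 * ε) := by ring
    have h0 : 0 ≤ ∑ x : Fin n → F, Real.sqrt (sxF S x) :=
      Finset.sum_nonneg fun x _ => Real.sqrt_nonneg _
    have := Real.sqrt_le_sqrt hsq
    rwa [Real.sqrt_sq h0, Real.sqrt_mul (sq_nonneg Nn), Real.sqrt_sq hNn0.le] at this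
  -- per-x bound, raw form
  have hperx : ∀ x : Fin n → F,
      (∑ g : (Fin k → F) → F,
          rhoNormSq (red1 S.ψ 0) (Sh x g - psqrt (R.P (xgt k hkn x) g)))
        ≤ (∑ g : (Fin k → F) → F, ∑ a : F, if a ≠ g (xle hkn x) then
            rTr ((R.P (xgt k hkn x) g ⊗ₖ S.A x a) * red2 S.ψ 0 1) else 0)
          + 3 * Real.sqrt (sxF S x) := by
    intro x
    rw [Finset.sum_congr rfl fun g (_ : g ∈ Finset.univ) => obj_term_eq hd S hkn R x g]
    rw [Finset.sum_congr rfl fun g (_ : g ∈ Finset.univ) => inc_term_eq hd S hkn R x g]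
    exact perx_strategy S hkn R x
  -- objective bound
  have hobj : objective hkn R (red1 S.ψ 0) Sh
      ≤ incA hkn R S.A (red2 S.ψ 0 1) + 5 * Real.sqrt ε := by
    rw [objective, incA]
    have hTO : (∑ x : Fin n → F, ∑ g : (Fin k → F) → F,
        rhoNormSq (red1 S.ψ 0) (Sh x g - psqrt (R.P (xgt k hkn x) g)))
        ≤ (∑ x : Fin n → F, ∑ g : (Fin k → F) → F, ∑ a : F, if a ≠ g (xle hkn x) then
            rTr ((R.P (xgt k hkn x) g ⊗ₖ S.A x a) * red2 S.ψ 0 1) else 0)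
          + 3 * (Nn * Real.sqrt (2 * ε)) := by
      calc (∑ x : Fin n → F, ∑ g : (Fin k → F) → F,
            rhoNormSq (red1 S.ψ 0) (Sh x g - psqrt (R.P (xgt k hkn x) g)))
          ≤ ∑ x : Fin n → F, ((∑ g : (Fin k → F) → F, ∑ a : F, if a ≠ g (xle hkn x) then
              rTr ((R.P (xgt k hkn x) g ⊗ₖ S.A x a) * red2 S.ψ 0 1) else 0)
              + 3 * Real.sqrt (sxF S x)) := Finset.sum_le_sum fun x _ => hperx x
        _ = (∑ x : Fin n → F, ∑ g : (Fin k → F) → F, ∑ a : F, if a ≠ g (xle hkn x) then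
              rTr ((R.P (xgt k hkn x) g ⊗ₖ S.A x a) * red2 S.ψ 0 1) else 0)
            + 3 * ∑ x : Fin n → F, Real.sqrt (sxF S x) := by
            rw [Finset.sum_add_distrib, ← Finset.mul_sum]
        _ ≤ _ := by
            have := hsqrt_sum
            gcongr
    have harith : ∀ A B : ℝ, A ≤ B + 3 * (Nn * Real.sqrt (2 * ε)) →
        A / Nn ≤ B / Nn + 5 * Real.sqrt ε := by
      intro A B hAB
      have h52 : 3 * Real.sqrt (2 * ε) ≤ 5 * Real.sqrt ε := by
        rw [Real.sqrt_mul (by norm_num : (0:ℝ) ≤ 2)]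
        have h2 : Real.sqrt 2 ≤ 5 / 3 := by
          rw [show (5:ℝ)/3 = Real.sqrt ((5/3)^2) from (Real.sqrt_sq (by norm_num)).symm]
          exact Real.sqrt_le_sqrt (by norm_num)
        nlinarith [Real.sqrt_nonneg ε]
      have hstep : A / Nn ≤ (B + 3 * (Nn * Real.sqrt (2 * ε))) / Nn :=
        (div_le_div_iff_of_pos_right hNn0).mpr hAB
      have heq : (B + 3 * (Nn * Real.sqrt (2 * ε))) / Nn = B / Nn + 3 * Real.sqrt (2 * ε) := by
        field_simp
      rw [heq] at hstep
      linarith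
    rw [← hNn]
    exact harith _ _ hTO
  have hprog : progOpt hkn S.A R (red1 S.ψ 0)
      ≤ incA hkn R S.A (red2 S.ψ 0 1) + 5 * Real.sqrt ε := by
    refine le_trans ?_ hobj
    unfold progOpt
    refine csInf_le ⟨0, ?_⟩ ⟨Sh, hfeas, rfl⟩
    rintro w ⟨Sh', -, hw'⟩
    rw [← hw', objective]
    exact div_nonneg (Finset.sum_nonneg fun x _ => Finset.sum_nonneg fun g _ =>
      rhoNormSq_red1_nonneg hd S.ψ _) (by positivity)
  exact ⟨hfeas, hobj, hprog⟩

end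

end MIP
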